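/- Let 𝒮 be the space of smooth real-valued functions ψ on ℝ × S² such that for all integers k, m ≥ 0 one has |u|^k |∂_u^m ψ(u,n)| → 0 as |u| → ∞, uniformly in n ∈ S². Then the map σ(ψ₁, ψ₂) := (1/2) ∫_{S²} ∫_ℝ ( ψ₂(u,n) ∂_u ψ₁(u,n) − ψ₁(u,n) ∂_u ψ₂(u,n) ) du dσ(n) is a well-defined, bilinear, antisymmetric form on 𝒮, and it is nondegenerate: if ψ ∈ 𝒮 satisfies σ(ψ, φ) = 0 for every φ ∈ 𝒮, then ψ = 0. -/

import Mathlib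

open MeasureTheory Metric Filter
open scoped Topology Manifold InnerProductSpace

noncomputable section

/-- `E3` is Euclidean three-dimensional space. -/
abbrev E3 : Type := EuclideanSpace ℝ (Fin 3)

/-- `S2` is the unit sphere in `E3`. -/
abbrev S2 : Type := Metric.sphere (0 : E3) 1

instance : Fact (Module.finrank ℝ E3 = 2 + 1) := ⟨by simp⟩

/-- The standard surface measure on the unit sphere `S²`. -/
def sphereMeasure : Measure S2 := (volume : Measure E3).toSphere

/-- The space `𝒮(ℑ⁺)` of smooth functions `ψ` on `ℝ × S²` such that
`|u|^k |∂_u^m ψ(u,n)| → 0` as `|u| → ∞`, uniformly in `n ∈ S²`, for all `k, m ≥ 0`. -/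
def InScriSpace (ψ : ℝ × S2 → ℝ) : Prop :=
  ContMDiff ((𝓘(ℝ, ℝ)).prod (𝓡 2)) (𝓘(ℝ, ℝ)) (⊤ : ℕ∞) ψ ∧
  ∀ k m : ℕ, ∀ ε : ℝ, 0 < ε → ∃ R : ℝ, ∀ u : ℝ, R ≤ |u| →
    ∀ n : S2, |u| ^ k * |iteratedDeriv m (fun v : ℝ => ψ (v, n)) u| < ε

/-- The symplectic form
`σ(ψ₁, ψ₂) = (1/2) ∫_{S²} ∫_ℝ (ψ₂ ∂_u ψ₁ − ψ₁ ∂_u ψ₂) du dσ(n)` on `𝒮(ℑ⁺)`. -/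
def scriForm (ψ₁ ψ₂ : ℝ × S2 → ℝ) : ℝ :=
  (1 / 2) * ∫ n : S2, (∫ u : ℝ,
    (ψ₂ (u, n) * deriv (fun v : ℝ => ψ₁ (v, n)) u
      - ψ₁ (u, n) * deriv (fun v : ℝ => ψ₂ (v, n)) u)) ∂sphereMeasure

abbrev E2 : Type := EuclideanSpace ℝ (Fin 2)

instance : IsFiniteMeasure sphereMeasure := by
  unfold sphereMeasure; infer_instance
section Helpers

lemma iteratedDeriv_zero_fun (m : ℕ) : iteratedDeriv m (fun _ : ℝ => (0:ℝ)) = fun _ => 0 := by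
  induction m with
  | zero => simp [iteratedDeriv_zero]
  | succ m ih => rw [iteratedDeriv_succ, ih]; simp

lemma iteratedDeriv_eq_zero_of_zero_on_open {f : ℝ → ℝ} {O : Set ℝ} (hO : IsOpen O)
    (hf : ∀ x ∈ O, f x = 0) (m : ℕ) : ∀ x ∈ O, iteratedDeriv m f x = 0 := by
  intro x hx
  have h : f =ᶠ[𝓝 x] (fun _ => (0:ℝ)) :=
    Filter.eventuallyEq_of_mem (hO.mem_nhds hx) hf
  rw [h.iteratedDeriv_eq m, iteratedDeriv_zero_fun]

lemma my_iteratedDeriv_add {f g : ℝ → ℝ} (hf : ContDiff ℝ (⊤:ℕ∞) f) (hg : ContDiff ℝ ⊤ g) (m : ℕ) :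
    iteratedDeriv m (fun v => f v + g v) = fun u => iteratedDeriv m f u + iteratedDeriv m g u := by
  induction m with
  | zero => simp [iteratedDeriv_zero]
  | succ m ih =>
    funext u
    rw [iteratedDeriv_succ, ih, iteratedDeriv_succ, iteratedDeriv_succ]
    exact deriv_add
      ((hf.differentiable_iteratedDeriv m (by exact_mod_cast WithTop.natCast_lt_top m)).differentiableAt)
      ((hg.differentiable_iteratedDeriv m (by exact_mod_cast WithTop.natCast_lt_top m)).differentiableAt)

lemma my_iteratedDeriv_const_mul {f : ℝ → ℝ} (hf : ContDiff ℝ (⊤:ℕ∞) f) (c : ℝ) (m : ℕ) :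
    iteratedDeriv m (fun v => c * f v) = fun u => c * iteratedDeriv m f u := by
  induction m with
  | zero => simp [iteratedDeriv_zero]
  | succ m ih =>
    funext u
    rw [iteratedDeriv_succ, ih, iteratedDeriv_succ]
    exact deriv_const_mul c
      ((hf.differentiable_iteratedDeriv m (by exact_mod_cast WithTop.natCast_lt_top m)).differentiableAt)

/-- FTC : the integral over ℝ of the derivative of a compactly supported C¹ function is 0. -/
lemma integral_deriv_eq_zero_of_compactSupport {f : ℝ → ℝ} (hf : ContDiff ℝ 1 f)
    (hsupp : HasCompactSupport f) : ∫ u : ℝ, deriv f u = 0 := by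
  obtain ⟨r, hr⟩ := hsupp.isCompact.isBounded.subset_closedBall 0
  set M : ℝ := |r| + 1 with hMdef
  have hM : tsupport f ⊆ Set.Icc (-M) M := by
    refine hr.trans ?_
    rw [Real.closedBall_eq_Icc]
    apply Set.Icc_subset_Icc
    · simp only [zero_sub, hMdef, neg_le_neg_iff]
      nlinarith [le_abs_self r, abs_nonneg r]
    · simp only [zero_add, hMdef]
      nlinarith [le_abs_self r]
  have hsub : Function.support (deriv f) ⊆ Set.Ioc (-(M+1)) (M+1) := by
    refine (support_deriv_subset.trans hM).trans ?_
    intro x hx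
    exact ⟨by linarith [hx.1], by linarith [hx.2]⟩
  have h1 : ∫ u : ℝ, deriv f u = ∫ u in (-(M+1))..(M+1), deriv f u :=
    (intervalIntegral.integral_eq_integral_of_support_subset hsub).symm
  have hderivcont : Continuous (deriv f) := hf.continuous_deriv le_rfl
  have h2 : ∫ u in (-(M+1))..(M+1), deriv f u = f (M+1) - f (-(M+1)) := by
    apply intervalIntegral.integral_deriv_eq_sub
    · intro x _
      exact (hf.differentiable one_ne_zero).differentiableAt
    · exact hderivcont.intervalIntegrable _ _
  have hfa : f (M+1) = 0 := by
    apply image_eq_zero_of_notMem_tsupport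
    intro hmem
    have := (hM hmem).2
    linarith
  have hfb : f (-(M+1)) = 0 := by
    apply image_eq_zero_of_notMem_tsupport
    intro hmem
    have := (hM hmem).1
    linarith
  rw [h1, h2, hfa, hfb, sub_zero]

end Helpers
lemma slice_contDiff {ψ : ℝ × S2 → ℝ}
    (h : ContMDiff ((𝓘(ℝ, ℝ)).prod (𝓡 2)) (𝓘(ℝ, ℝ)) (⊤ : ℕ∞) ψ) (n : S2) :
    ContDiff ℝ (⊤:ℕ∞) (fun v : ℝ => ψ (v, n)) := by
  have : ContMDiff 𝓘(ℝ, ℝ) (𝓘(ℝ, ℝ)) (⊤ : ℕ∞) (fun v : ℝ => ψ (v, n)) :=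
    h.comp (ContMDiff.prodMk contMDiff_id contMDiff_const)
  exact this.contDiff

lemma continuous_derivSlice {ψ : ℝ × S2 → ℝ}
    (h : ContMDiff ((𝓘(ℝ, ℝ)).prod (𝓡 2)) (𝓘(ℝ, ℝ)) (⊤ : ℕ∞) ψ) :
    Continuous (fun p : ℝ × S2 => deriv (fun v : ℝ => ψ (v, p.2)) p.1) := by
  rw [continuous_iff_continuousAt]
  rintro ⟨u₀, n₀⟩
  -- chart around n₀ on the sphere
  set e := extChartAt (𝓡 2) n₀ with he
  -- the function read in the product chart
  set G : ℝ × E2 → ℝ := fun q => ψ (q.1, e.symm q.2) with hG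
  have hchart := (contMDiff_iff.1 h).2 (u₀, n₀) 0
  have hGsmooth : ContDiffOn ℝ (⊤ : ℕ∞) G (Set.univ ×ˢ e.target) := by
    have := hchart
    simp only [extChartAt_prod, extChartAt_model_space_eq_id, PartialEquiv.refl_coe,
      PartialEquiv.prod_coe_symm, PartialEquiv.refl_symm, PartialEquiv.prod_target,
      PartialEquiv.refl_target, Function.comp_def, id_eq, PartialEquiv.refl_source,
      Set.preimage_univ, Set.inter_univ] at this
    convert this using 1
  have hTopen : IsOpen (Set.univ ×ˢ e.target : Set (ℝ × E2)) :=
    isOpen_univ.prod (isOpen_extChartAt_target n₀)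
  have hSopen : IsOpen e.source := isOpen_extChartAt_source n₀
  have hn₀S : n₀ ∈ e.source := mem_extChartAt_source n₀
  -- key identity
  have key : ∀ n ∈ e.source, ∀ v : ℝ,
      deriv (fun v : ℝ => ψ (v, n)) v = fderiv ℝ G (v, e n) (1, 0) := by
    intro n hn v
    have hmem : ((v : ℝ), e n) ∈ (Set.univ ×ˢ e.target : Set (ℝ × E2)) :=
      ⟨Set.mem_univ _, e.map_source hn⟩
    have hdiff : DifferentiableAt ℝ G (v, e n) :=
      (hGsmooth.differentiableOn (by simp)).differentiableAt (hTopen.mem_nhds hmem)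
    have heq : (fun v : ℝ => ψ (v, n)) = fun v : ℝ => G (v, e n) := by
      funext w
      simp only [hG]
      rw [e.left_inv hn]
    rw [heq]
    have hcurve : HasDerivAt (fun v : ℝ => ((v, e n) : ℝ × E2)) ((1 : ℝ), (0 : E2)) v :=
      (hasDerivAt_id v).prodMk (hasDerivAt_const v (e n))
    exact (hdiff.hasFDerivAt.comp_hasDerivAt v hcurve).deriv
  -- continuity of the chart expression
  have hfd : ContinuousOn (fderiv ℝ G) (Set.univ ×ˢ e.target) :=
    hGsmooth.continuousOn_fderiv_of_isOpen hTopen (by exact_mod_cast le_top)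
  have hmap : ContinuousOn (fun p : ℝ × S2 => ((p.1, e p.2) : ℝ × E2))
      (Set.univ ×ˢ e.source) := by
    apply ContinuousOn.prodMk
    · exact continuous_fst.continuousOn
    · exact (continuousOn_extChartAt n₀).comp continuous_snd.continuousOn
        (fun p hp => hp.2)
  have hmapsto : Set.MapsTo (fun p : ℝ × S2 => ((p.1, e p.2) : ℝ × E2))
      (Set.univ ×ˢ e.source) (Set.univ ×ˢ e.target) :=
    fun p hp => ⟨Set.mem_univ _, e.map_source hp.2⟩
  have hcont2 : ContinuousOn (fun p : ℝ × S2 => fderiv ℝ G (p.1, e p.2) ((1 : ℝ), (0 : E2)))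
      (Set.univ ×ˢ e.source) := by
    have : ContinuousOn (fun p : ℝ × S2 => fderiv ℝ G (p.1, e p.2))
        (Set.univ ×ˢ e.source) := hfd.comp hmap hmapsto
    exact (ContinuousLinearMap.apply ℝ ℝ ((1 : ℝ), (0 : E2))).continuous.comp_continuousOn this
  have hnhds : (Set.univ ×ˢ e.source : Set (ℝ × S2)) ∈ 𝓝 ((u₀, n₀) : ℝ × S2) :=
    (isOpen_univ.prod hSopen).mem_nhds ⟨Set.mem_univ _, hn₀S⟩
  have hca : ContinuousAt (fun p : ℝ × S2 => fderiv ℝ G (p.1, e p.2) ((1 : ℝ), (0 : E2)))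
      (u₀, n₀) := hcont2.continuousAt hnhds
  apply hca.congr
  filter_upwards [hnhds] with p hp
  exact (key p.2 hp.2 p.1).symm

section Bounds

lemma exists_uniform_bound {g : ℝ × S2 → ℝ} (hc : Continuous g)
    (h0 : ∃ R, ∀ u : ℝ, R ≤ |u| → ∀ n : S2, |g (u, n)| < 1)
    (h2 : ∃ R, ∀ u : ℝ, R ≤ |u| → ∀ n : S2, |u| ^ 2 * |g (u, n)| < 1) :
    ∃ C, 0 ≤ C ∧ ∀ (u : ℝ) (n : S2), |g (u, n)| ≤ C * (1 + u ^ 2)⁻¹ := by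
  obtain ⟨R₀, h0⟩ := h0
  obtain ⟨R₂, h2⟩ := h2
  set R : ℝ := max |R₀| |R₂| with hR
  have hR0 : 0 ≤ R := le_trans (abs_nonneg R₀) (le_max_left _ _)
  have hK : IsCompact ((Set.Icc (-R) R) ×ˢ (Set.univ : Set S2)) :=
    (isCompact_Icc).prod isCompact_univ
  obtain ⟨M, hM⟩ := hK.exists_bound_of_continuousOn hc.continuousOn
  set C : ℝ := max 2 ((1 + R ^ 2) * max M 0) with hC
  have hC0 : (0:ℝ) ≤ C := le_trans (by norm_num) (le_max_left _ _)
  refine ⟨C, hC0, fun u n => ?_⟩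
  have h1u : (0:ℝ) < 1 + u ^ 2 := by positivity
  rw [show C * (1 + u ^ 2)⁻¹ = C / (1 + u ^ 2) by ring, le_div_iff₀ h1u]
  rcases le_or_gt R |u| with hc1 | hc1
  · have e0 := h0 u (le_trans (le_trans (le_abs_self R₀) (le_max_left _ _)) hc1) n
    have e2 := h2 u (le_trans (le_trans (le_abs_self R₂) (le_max_right _ _)) hc1) n
    have habs : (0:ℝ) ≤ |g (u, n)| := abs_nonneg _
    have hu2 : u ^ 2 * |g (u, n)| < 1 := by rwa [← sq_abs]
    have : |g (u, n)| * (1 + u ^ 2) < 2 := by nlinarith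
    exact le_trans this.le (le_max_left _ _)
  · have hmem : ((u, n) : ℝ × S2) ∈ (Set.Icc (-R) R) ×ˢ (Set.univ : Set S2) := by
      refine ⟨?_, Set.mem_univ _⟩
      rw [Set.mem_Icc, ← abs_le]
      exact hc1.le
    have hgM : |g (u, n)| ≤ max M 0 := le_trans (hM _ hmem) (le_max_left _ _)
    have hM0 : (0:ℝ) ≤ max M 0 := le_max_right _ _
    have hu2R : u ^ 2 ≤ R ^ 2 := by
      rw [← sq_abs]
      exact pow_le_pow_left₀ (abs_nonneg u) hc1.le 2
    have : |g (u, n)| * (1 + u ^ 2) ≤ (1 + R ^ 2) * max M 0 := by nlinarith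
    exact le_trans this (le_max_right _ _)

lemma psi_bound {ψ : ℝ × S2 → ℝ} (hψ : InScriSpace ψ) :
    ∃ C, 0 ≤ C ∧ ∀ (u : ℝ) (n : S2), |ψ (u, n)| ≤ C * (1 + u ^ 2)⁻¹ := by
  apply exists_uniform_bound hψ.1.continuous
  · obtain ⟨R, hR⟩ := hψ.2 0 0 1 one_pos
    exact ⟨R, fun u hu n => by simpa [iteratedDeriv_zero] using hR u hu n⟩
  · obtain ⟨R, hR⟩ := hψ.2 2 0 1 one_pos
    exact ⟨R, fun u hu n => by simpa [iteratedDeriv_zero] using hR u hu n⟩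

lemma dpsi_bound {ψ : ℝ × S2 → ℝ} (hψ : InScriSpace ψ) :
    ∃ C, 0 ≤ C ∧ ∀ (u : ℝ) (n : S2),
      |deriv (fun v : ℝ => ψ (v, n)) u| ≤ C * (1 + u ^ 2)⁻¹ := by
  apply exists_uniform_bound (g := fun p : ℝ × S2 => deriv (fun v : ℝ => ψ (v, p.2)) p.1)
    (continuous_derivSlice hψ.1)
  · obtain ⟨R, hR⟩ := hψ.2 0 1 1 one_pos
    exact ⟨R, fun u hu n => by simpa [iteratedDeriv_one] using hR u hu n⟩
  · obtain ⟨R, hR⟩ := hψ.2 2 1 1 one_pos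
    exact ⟨R, fun u hu n => by simpa [iteratedDeriv_one] using hR u hu n⟩

lemma kernel_bound {ψ₁ ψ₂ : ℝ × S2 → ℝ} (h₁ : InScriSpace ψ₁) (h₂ : InScriSpace ψ₂) :
    ∃ K, 0 ≤ K ∧ ∀ (u : ℝ) (n : S2),
      |ψ₂ (u, n) * deriv (fun v : ℝ => ψ₁ (v, n)) u
        - ψ₁ (u, n) * deriv (fun v : ℝ => ψ₂ (v, n)) u| ≤ K * (1 + u ^ 2)⁻¹ := by
  obtain ⟨C₁, hC₁0, hC₁⟩ := psi_bound h₁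
  obtain ⟨C₂, hC₂0, hC₂⟩ := psi_bound h₂
  obtain ⟨D₁, hD₁0, hD₁⟩ := dpsi_bound h₁
  obtain ⟨D₂, hD₂0, hD₂⟩ := dpsi_bound h₂
  refine ⟨C₂ * D₁ + C₁ * D₂, by positivity, fun u n => ?_⟩
  set t : ℝ := (1 + u ^ 2)⁻¹ with ht
  have ht0 : 0 < t := by positivity
  have ht1 : t ≤ 1 := by
    rw [ht]
    apply inv_le_one_of_one_le₀
    nlinarith
  have b₂ : |ψ₂ (u, n)| ≤ C₂ := le_trans (hC₂ u n) (by nlinarith)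
  have b₁ : |ψ₁ (u, n)| ≤ C₁ := le_trans (hC₁ u n) (by nlinarith)
  have d₁ := hD₁ u n
  have d₂ := hD₂ u n
  calc |ψ₂ (u, n) * deriv (fun v : ℝ => ψ₁ (v, n)) u
        - ψ₁ (u, n) * deriv (fun v : ℝ => ψ₂ (v, n)) u|
      ≤ |ψ₂ (u, n)| * |deriv (fun v : ℝ => ψ₁ (v, n)) u|
        + |ψ₁ (u, n)| * |deriv (fun v : ℝ => ψ₂ (v, n)) u| := by
        refine le_trans (abs_sub _ _) ?_
        rw [abs_mul, abs_mul]
    _ ≤ C₂ * (D₁ * t) + C₁ * (D₂ * t) := by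
        apply add_le_add <;>
          exact mul_le_mul (by assumption) (by assumption) (abs_nonneg _) (by assumption)
    _ = (C₂ * D₁ + C₁ * D₂) * t := by ring

lemma integrable_aux {f : ℝ → ℝ} (hf : Continuous f) {K : ℝ}
    (hK : ∀ u : ℝ, |f u| ≤ K * (1 + u ^ 2)⁻¹) : Integrable f := by
  apply Integrable.mono' (integrable_inv_one_add_sq.const_mul K) hf.aestronglyMeasurable
  filter_upwards with u
  rw [Real.norm_eq_abs]
  exact hK u

lemma continuous_kernel {ψ₁ ψ₂ : ℝ × S2 → ℝ}
    (h₁ : ContMDiff ((𝓘(ℝ, ℝ)).prod (𝓡 2)) (𝓘(ℝ, ℝ)) (⊤ : ℕ∞) ψ₁)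
    (h₂ : ContMDiff ((𝓘(ℝ, ℝ)).prod (𝓡 2)) (𝓘(ℝ, ℝ)) (⊤ : ℕ∞) ψ₂) :
    Continuous (fun p : S2 × ℝ =>
      ψ₂ (p.2, p.1) * deriv (fun v : ℝ => ψ₁ (v, p.1)) p.2
        - ψ₁ (p.2, p.1) * deriv (fun v : ℝ => ψ₂ (v, p.1)) p.2) := by
  have hswap : Continuous (fun p : S2 × ℝ => ((p.2, p.1) : ℝ × S2)) :=
    continuous_snd.prodMk continuous_fst
  exact ((h₂.continuous.comp hswap).mul
    ((continuous_derivSlice h₁).comp hswap)).sub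
    ((h₁.continuous.comp hswap).mul ((continuous_derivSlice h₂).comp hswap))

lemma integrable_kernel {ψ₁ ψ₂ : ℝ × S2 → ℝ} (h₁ : InScriSpace ψ₁) (h₂ : InScriSpace ψ₂) :
    Integrable (fun p : S2 × ℝ =>
        ψ₂ (p.2, p.1) * deriv (fun v : ℝ => ψ₁ (v, p.1)) p.2
          - ψ₁ (p.2, p.1) * deriv (fun v : ℝ => ψ₂ (v, p.1)) p.2)
      (sphereMeasure.prod (volume : Measure ℝ)) := by
  obtain ⟨K, hK0, hK⟩ := kernel_bound h₁ h₂
  have hbint : Integrable (fun p : S2 × ℝ => K * (1 + p.2 ^ 2)⁻¹)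
      (sphereMeasure.prod (volume : Measure ℝ)) := by
    have := (integrable_const (μ := sphereMeasure) (1:ℝ)).mul_prod
      (integrable_inv_one_add_sq.const_mul K)
    simpa using this
  apply Integrable.mono' hbint (continuous_kernel h₁.1 h₂.1).aestronglyMeasurable
  filter_upwards with p
  rw [Real.norm_eq_abs]
  exact hK p.2 p.1

lemma integrable_slice_kernel {ψ₁ ψ₂ : ℝ × S2 → ℝ} (h₁ : InScriSpace ψ₁)
    (h₂ : InScriSpace ψ₂) (n : S2) :
    Integrable (fun u : ℝ => ψ₂ (u, n) * deriv (fun v : ℝ => ψ₁ (v, n)) u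
      - ψ₁ (u, n) * deriv (fun v : ℝ => ψ₂ (v, n)) u) := by
  obtain ⟨K, hK0, hK⟩ := kernel_bound h₁ h₂
  apply integrable_aux ?_ (fun u => hK u n)
  have := (continuous_kernel h₁.1 h₂.1).comp
    ((continuous_const (y := n)).prodMk continuous_id : Continuous fun u : ℝ => ((n, u) : S2 × ℝ))
  exact this

lemma integrable_inner_integral {ψ₁ ψ₂ : ℝ × S2 → ℝ} (h₁ : InScriSpace ψ₁)
    (h₂ : InScriSpace ψ₂) :
    Integrable (fun n : S2 => ∫ u : ℝ,
      (ψ₂ (u, n) * deriv (fun v : ℝ => ψ₁ (v, n)) u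
        - ψ₁ (u, n) * deriv (fun v : ℝ => ψ₂ (v, n)) u)) sphereMeasure := by
  have := (integrable_kernel h₁ h₂).integral_prod_left
  exact this

end Bounds

section Linearity

lemma slice_diff {ψ : ℝ × S2 → ℝ}
    (h : ContMDiff ((𝓘(ℝ, ℝ)).prod (𝓡 2)) (𝓘(ℝ, ℝ)) (⊤ : ℕ∞) ψ) (n : S2) (u : ℝ) :
    DifferentiableAt ℝ (fun v : ℝ => ψ (v, n)) u :=
  ((slice_contDiff h n).differentiable (by simp)).differentiableAt

lemma scriForm_left_linear {ψ₁ ψ₁' ψ₂ : ℝ × S2 → ℝ} (h₁ : InScriSpace ψ₁)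
    (h₁' : InScriSpace ψ₁') (h₂ : InScriSpace ψ₂) (a : ℝ) :
    scriForm (fun p => a * ψ₁ p + ψ₁' p) ψ₂
      = a * scriForm ψ₁ ψ₂ + scriForm ψ₁' ψ₂ := by
  have hslice : ∀ (n : S2) (u : ℝ),
      deriv (fun v : ℝ => a * ψ₁ (v, n) + ψ₁' (v, n)) u
        = a * deriv (fun v : ℝ => ψ₁ (v, n)) u + deriv (fun v : ℝ => ψ₁' (v, n)) u := by
    intro n u
    rw [deriv_fun_add ((slice_diff h₁.1 n u).const_mul a) (slice_diff h₁'.1 n u),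
      deriv_const_mul a (slice_diff h₁.1 n u)]
  have key : ∀ n : S2,
      (∫ u : ℝ, (ψ₂ (u, n) * deriv (fun v : ℝ => a * ψ₁ (v, n) + ψ₁' (v, n)) u
        - (a * ψ₁ (u, n) + ψ₁' (u, n)) * deriv (fun v : ℝ => ψ₂ (v, n)) u))
      = a * (∫ u : ℝ, (ψ₂ (u, n) * deriv (fun v : ℝ => ψ₁ (v, n)) u
          - ψ₁ (u, n) * deriv (fun v : ℝ => ψ₂ (v, n)) u))
        + ∫ u : ℝ, (ψ₂ (u, n) * deriv (fun v : ℝ => ψ₁' (v, n)) u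
          - ψ₁' (u, n) * deriv (fun v : ℝ => ψ₂ (v, n)) u) := by
    intro n
    have hfun : (fun u : ℝ => ψ₂ (u, n) * deriv (fun v : ℝ => a * ψ₁ (v, n) + ψ₁' (v, n)) u
        - (a * ψ₁ (u, n) + ψ₁' (u, n)) * deriv (fun v : ℝ => ψ₂ (v, n)) u)
        = fun u : ℝ => a * (ψ₂ (u, n) * deriv (fun v : ℝ => ψ₁ (v, n)) u
            - ψ₁ (u, n) * deriv (fun v : ℝ => ψ₂ (v, n)) u)
          + (ψ₂ (u, n) * deriv (fun v : ℝ => ψ₁' (v, n)) u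
            - ψ₁' (u, n) * deriv (fun v : ℝ => ψ₂ (v, n)) u) := by
      funext u
      rw [hslice n u]
      ring
    rw [hfun, integral_add ((integrable_slice_kernel h₁ h₂ n).const_mul a)
      (integrable_slice_kernel h₁' h₂ n), integral_const_mul]
  simp only [scriForm]
  rw [integral_congr_ae (Eventually.of_forall key),
    integral_add ((integrable_inner_integral h₁ h₂).const_mul a)
      (integrable_inner_integral h₁' h₂), integral_const_mul]
  ring

lemma scriForm_right_linear {ψ₁ ψ₂ ψ₂' : ℝ × S2 → ℝ} (h₁ : InScriSpace ψ₁)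
    (h₂ : InScriSpace ψ₂) (h₂' : InScriSpace ψ₂') (a : ℝ) :
    scriForm ψ₁ (fun p => a * ψ₂ p + ψ₂' p)
      = a * scriForm ψ₁ ψ₂ + scriForm ψ₁ ψ₂' := by
  have hslice : ∀ (n : S2) (u : ℝ),
      deriv (fun v : ℝ => a * ψ₂ (v, n) + ψ₂' (v, n)) u
        = a * deriv (fun v : ℝ => ψ₂ (v, n)) u + deriv (fun v : ℝ => ψ₂' (v, n)) u := by
    intro n u
    rw [deriv_fun_add ((slice_diff h₂.1 n u).const_mul a) (slice_diff h₂'.1 n u),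
      deriv_const_mul a (slice_diff h₂.1 n u)]
  have key : ∀ n : S2,
      (∫ u : ℝ, ((a * ψ₂ (u, n) + ψ₂' (u, n)) * deriv (fun v : ℝ => ψ₁ (v, n)) u
        - ψ₁ (u, n) * deriv (fun v : ℝ => a * ψ₂ (v, n) + ψ₂' (v, n)) u))
      = a * (∫ u : ℝ, (ψ₂ (u, n) * deriv (fun v : ℝ => ψ₁ (v, n)) u
          - ψ₁ (u, n) * deriv (fun v : ℝ => ψ₂ (v, n)) u))
        + ∫ u : ℝ, (ψ₂' (u, n) * deriv (fun v : ℝ => ψ₁ (v, n)) u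
          - ψ₁ (u, n) * deriv (fun v : ℝ => ψ₂' (v, n)) u) := by
    intro n
    have hfun : (fun u : ℝ => (a * ψ₂ (u, n) + ψ₂' (u, n)) * deriv (fun v : ℝ => ψ₁ (v, n)) u
        - ψ₁ (u, n) * deriv (fun v : ℝ => a * ψ₂ (v, n) + ψ₂' (v, n)) u)
        = fun u : ℝ => a * (ψ₂ (u, n) * deriv (fun v : ℝ => ψ₁ (v, n)) u
            - ψ₁ (u, n) * deriv (fun v : ℝ => ψ₂ (v, n)) u)
          + (ψ₂' (u, n) * deriv (fun v : ℝ => ψ₁ (v, n)) u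
            - ψ₁ (u, n) * deriv (fun v : ℝ => ψ₂' (v, n)) u) := by
      funext u
      rw [hslice n u]
      ring
    rw [hfun, integral_add ((integrable_slice_kernel h₁ h₂ n).const_mul a)
      (integrable_slice_kernel h₁ h₂' n), integral_const_mul]
  simp only [scriForm]
  rw [integral_congr_ae (Eventually.of_forall key),
    integral_add ((integrable_inner_integral h₁ h₂).const_mul a)
      (integrable_inner_integral h₁ h₂'), integral_const_mul]
  ring

lemma scriForm_antisymm (ψ₁ ψ₂ : ℝ × S2 → ℝ) : scriForm ψ₁ ψ₂ = - scriForm ψ₂ ψ₁ := by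
  simp only [scriForm]
  have h : (fun n : S2 => ∫ u : ℝ, (ψ₂ (u, n) * deriv (fun v : ℝ => ψ₁ (v, n)) u
      - ψ₁ (u, n) * deriv (fun v : ℝ => ψ₂ (v, n)) u))
      = fun n : S2 => - ∫ u : ℝ, (ψ₁ (u, n) * deriv (fun v : ℝ => ψ₂ (v, n)) u
        - ψ₂ (u, n) * deriv (fun v : ℝ => ψ₁ (v, n)) u) := by
    funext n
    rw [← integral_neg]
    congr 1
    funext u
    ring
  rw [h, integral_neg]
  ring

end Linearity

open scoped Pointwise
section Positivity

lemma sphereMeasure_pos {U : Set S2} (hU : IsOpen U) (hne : U.Nonempty) :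
    0 < sphereMeasure U := by
  obtain ⟨V, hV, hVU⟩ := isOpen_induced_iff.1 hU
  obtain ⟨n₀, hn₀⟩ := hne
  -- the open cone over U
  set s : Set E3 := ball (0 : E3) 1 ∩ {(0 : E3)}ᶜ with hs
  have hsopen : IsOpen s := isOpen_ball.inter isOpen_compl_singleton
  have hfc : ContinuousOn (fun y : E3 => ‖y‖⁻¹ • y) s := by
    apply ContinuousOn.fun_smul
    · exact (continuous_norm.continuousOn).inv₀ fun y hy =>
        norm_ne_zero_iff.2 (by simpa using hy.2)
    · exact continuousOn_id
  set C : Set E3 := s ∩ (fun y : E3 => ‖y‖⁻¹ • y) ⁻¹' V with hC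
  have hCopen : IsOpen C := hfc.isOpen_inter_preimage hsopen hV
  have hCne : C.Nonempty := by
    refine ⟨(2⁻¹ : ℝ) • (n₀ : E3), ?_, ?_⟩
    · have hnorm : ‖(n₀ : E3)‖ = 1 := by
        have := n₀.2
        rwa [mem_sphere_zero_iff_norm] at this
      constructor
      · rw [mem_ball_zero_iff, norm_smul, hnorm]
        norm_num
      · simp only [Set.mem_compl_iff, Set.mem_singleton_iff]
        intro h
        apply_fun (‖·‖) at h
        rw [norm_smul, hnorm, norm_zero] at h
        norm_num at h
    · have hnorm : ‖(n₀ : E3)‖ = 1 := by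
        have := n₀.2
        rwa [mem_sphere_zero_iff_norm] at this
      have h1 : ‖(2⁻¹ : ℝ) • (n₀ : E3)‖ = 2⁻¹ := by
        rw [norm_smul, hnorm]
        norm_num
      simp only [Set.mem_preimage, h1]
      rw [smul_smul]
      norm_num
      have : (n₀ : E3) ∈ V := by
        have : n₀ ∈ Subtype.val ⁻¹' V := hVU ▸ hn₀
        exact this
      exact this
  have hsub : C ⊆ Set.Ioo (0:ℝ) 1 • (Subtype.val '' U) := by
    rintro y ⟨⟨hball, hne0⟩, hyV⟩
    have hy0 : y ≠ 0 := by simpa using hne0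
    have hnorm0 : ‖y‖ ≠ 0 := norm_ne_zero_iff.2 hy0
    have hx : ‖(‖y‖⁻¹ • y)‖ = 1 := by
      rw [norm_smul, norm_inv, norm_norm, inv_mul_cancel₀ hnorm0]
    have hxs : (‖y‖⁻¹ • y) ∈ Metric.sphere (0 : E3) 1 := by
      rwa [mem_sphere_zero_iff_norm]
    have hxU : (⟨‖y‖⁻¹ • y, hxs⟩ : S2) ∈ U := by
      rw [← hVU]
      exact hyV
    refine Set.mem_smul.2 ⟨‖y‖, ?_, ‖y‖⁻¹ • y, ⟨⟨_, hxU, rfl⟩, ?_⟩⟩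
    · exact ⟨norm_pos_iff.2 hy0, by rwa [mem_ball_zero_iff] at hball⟩
    · rw [smul_smul, mul_inv_cancel₀ hnorm0, one_smul]
  have hCpos : 0 < (volume : Measure E3) C := hCopen.measure_pos _ hCne
  rw [sphereMeasure, Measure.toSphere_apply' _ hU.measurableSet]
  apply ENNReal.mul_pos
  · simp
  · exact (lt_of_lt_of_le hCpos (measure_mono hsub)).ne'

end Positivity

section Vanish

lemma sphere_vanish_aux {Q : S2 → ℝ} (hQ : Continuous Q)
    (h : ∀ g : S2 → ℝ, ContMDiff (𝓡 2) (𝓘(ℝ, ℝ)) (⊤ : ℕ∞) g →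
      ∫ n, g n * Q n ∂sphereMeasure = 0)
    {n₀ : S2} (hpos : 0 < Q n₀) : False := by
  set U : Set S2 := Q ⁻¹' (Set.Ioi (Q n₀ / 2)) with hUdef
  have hUopen : IsOpen U := isOpen_Ioi.preimage hQ
  have hn₀U : n₀ ∈ U := by
    simp only [hUdef, Set.mem_preimage, Set.mem_Ioi]
    linarith
  obtain ⟨g, hg0, hg1, hg01⟩ := exists_contMDiffMap_zero_one_of_isClosed (𝓡 2) (n := (⊤ : ℕ∞))
    (isClosed_compl_iff.2 hUopen) (isClosed_singleton (x := n₀))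
    (by
      rw [Set.disjoint_singleton_right]
      simpa using hn₀U)
  have hgc : Continuous (⇑g) := g.contMDiff.continuous
  have hint : Integrable (fun n => g n * Q n) sphereMeasure := by
    apply Continuous.integrable_of_hasCompactSupport (hgc.mul hQ)
    exact HasCompactSupport.of_compactSpace _
  have hnn : ∀ n, 0 ≤ g n * Q n := by
    intro n
    by_cases hn : n ∈ U
    · have h1 : 0 < Q n := lt_trans (by linarith) (Set.mem_preimage.1 hn)
      exact mul_nonneg (hg01 n).1 h1.le
    · have : g n = 0 := hg0 hn
      simp [this]
  set W : Set S2 := (⇑g) ⁻¹' (Set.Ioi (1/2 : ℝ)) with hWdef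
  have hWopen : IsOpen W := isOpen_Ioi.preimage hgc
  have hn₀W : n₀ ∈ W := by
    simp only [hWdef, Set.mem_preimage, Set.mem_Ioi]
    rw [hg1 rfl]
    norm_num
  have hWlow : ∀ n ∈ W, Q n₀ / 4 ≤ g n * Q n := by
    intro n hn
    have hgn : (1/2 : ℝ) < g n := hn
    have hnU : n ∈ U := by
      by_contra hnU
      rw [hg0 hnU] at hgn
      norm_num at hgn
    have hQn : Q n₀ / 2 < Q n := hnU
    nlinarith [(hg01 n).2]
  have h1 : ∫ n in W, g n * Q n ∂sphereMeasure ≤ ∫ n, g n * Q n ∂sphereMeasure :=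
    setIntegral_le_integral hint (Eventually.of_forall hnn)
  have h2 : Q n₀ / 4 * (sphereMeasure W).toReal ≤ ∫ n in W, g n * Q n ∂sphereMeasure :=
    setIntegral_ge_of_const_le_real hWopen.measurableSet (measure_ne_top _ _) hWlow
      hint.integrableOn
  have h3 : 0 < (sphereMeasure W).toReal :=
    ENNReal.toReal_pos (sphereMeasure_pos hWopen ⟨n₀, hn₀W⟩).ne' (measure_ne_top _ _)
  have h4 := h (⇑g) g.contMDiff
  nlinarith

lemma sphere_vanish {Q : S2 → ℝ} (hQ : Continuous Q)
    (h : ∀ g : S2 → ℝ, ContMDiff (𝓡 2) (𝓘(ℝ, ℝ)) (⊤ : ℕ∞) g →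
      ∫ n, g n * Q n ∂sphereMeasure = 0) :
    ∀ n, Q n = 0 := by
  intro n
  by_contra hne
  rcases Ne.lt_or_gt hne with hneg | hpos
  · apply sphere_vanish_aux (Q := fun m => - Q m) hQ.neg ?_ (n₀ := n) (by simpa using hneg)
    intro g hg
    have := h g hg
    simp only [mul_neg]
    rw [integral_neg, this, neg_zero]
  · exact sphere_vanish_aux hQ h hpos

end Vanish

section Bump

lemma bump_pos_aux {r : ℝ → ℝ} (hr : Continuous r)
    (h : ∀ (c : ℝ) (b : ContDiffBump c), ∫ u : ℝ, b u * r u = 0)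
    {x₀ : ℝ} (hx : 0 < r x₀) : False := by
  obtain ⟨δ, hδ, hball⟩ : ∃ δ > 0, ∀ y ∈ ball x₀ δ, r x₀ / 2 < r y := by
    have hopen : IsOpen (r ⁻¹' Set.Ioi (r x₀ / 2)) := isOpen_Ioi.preimage hr
    obtain ⟨δ, hδ, hsub⟩ := Metric.isOpen_iff.1 hopen x₀ (by
      simp only [Set.mem_preimage, Set.mem_Ioi]
      linarith)
    exact ⟨δ, hδ, fun y hy => hsub hy⟩
  set b : ContDiffBump x₀ := ⟨δ/2, δ, by linarith, by linarith⟩ with hb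
  have hrIn : b.rIn = δ/2 := rfl
  have hrOut : b.rOut = δ := rfl
  have hnn : ∀ u, 0 ≤ b u * r u := by
    intro u
    by_cases hu : u ∈ ball x₀ δ
    · exact mul_nonneg b.nonneg (by linarith [hball u hu])
    · have : b u = 0 := by
        rw [← Function.notMem_support, b.support_eq, hrOut]
        exact hu
      simp [this]
  have hint : Integrable (fun u => b u * r u) := by
    apply Continuous.integrable_of_hasCompactSupport (b.continuous.mul hr)
    exact b.hasCompactSupport.mul_right
  have h1 : ∫ u in closedBall x₀ (δ/2), b u * r u ≤ ∫ u : ℝ, b u * r u :=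
    setIntegral_le_integral hint (Eventually.of_forall hnn)
  have h2 : r x₀ / 2 * (volume (closedBall x₀ (δ/2))).toReal
      ≤ ∫ u in closedBall x₀ (δ/2), b u * r u := by
    apply setIntegral_ge_of_const_le_real measurableSet_closedBall
      measure_closedBall_lt_top.ne ?_ hint.integrableOn
    intro x hxmem
    have hb1 : b x = 1 := b.one_of_mem_closedBall (by rwa [hrIn])
    have hxball : x ∈ ball x₀ δ := by
      rw [mem_closedBall] at hxmem
      rw [mem_ball]
      linarith
    rw [hb1, one_mul]
    exact (hball x hxball).le
  have hvol : (volume (closedBall x₀ (δ/2))).toReal = δ := by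
    rw [Real.volume_closedBall, ENNReal.toReal_ofReal (by linarith)]
    ring
  have h0 := h x₀ b
  rw [hvol] at h2
  nlinarith

lemma zero_of_bump_integrals {r : ℝ → ℝ} (hr : Continuous r)
    (h : ∀ (c : ℝ) (b : ContDiffBump c), ∫ u : ℝ, b u * r u = 0) (x : ℝ) : r x = 0 := by
  by_contra hne
  rcases Ne.lt_or_gt hne with hneg | hpos
  · apply bump_pos_aux (r := fun u => - r u) hr.neg ?_ (x₀ := x) (by simpa using hneg)
    intro c b
    simp only [mul_neg]
    rw [integral_neg, h c b, neg_zero]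
  · exact bump_pos_aux hr h hpos

end Bump

section Nondegenerate

lemma testfun_inscri (g : S2 → ℝ) (hg : ContMDiff (𝓡 2) (𝓘(ℝ, ℝ)) (⊤ : ℕ∞) g)
    {c : ℝ} (b : ContDiffBump c) :
    InScriSpace (fun p : ℝ × S2 => g p.2 * b p.1) := by
  constructor
  · exact (hg.comp contMDiff_snd).mul
      ((ContDiff.contMDiff b.contDiff).comp contMDiff_fst)
  · intro k m ε hε
    refine ⟨|c| + b.rOut + 1, fun u hu n => ?_⟩
    have hzero : iteratedDeriv m (⇑b) u = 0 := by
      apply iteratedDeriv_eq_zero_of_zero_on_open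
        (O := (closedBall c b.rOut)ᶜ) isClosed_closedBall.isOpen_compl ?_ m u ?_
      · intro x hx
        rw [← Function.notMem_support, b.support_eq]
        intro hmem
        exact hx (ball_subset_closedBall hmem)
      · simp only [Set.mem_compl_iff, mem_closedBall, not_le, Real.dist_eq]
        have h1 : |u| - |c| ≤ |u - c| := abs_sub_abs_le_abs_sub u c
        have h2 : b.rOut + 1 ≤ |u| - |c| := by linarith
        linarith
    have hred : (fun v : ℝ => (fun p : ℝ × S2 => g p.2 * b p.1) (v, n))
        = fun v : ℝ => g n * b v := rfl
    rw [hred, my_iteratedDeriv_const_mul b.contDiff (g n) m]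
    simp only [hzero, mul_zero, abs_zero]
    exact hε

lemma Q_continuous {ψ : ℝ × S2 → ℝ} (hψ : InScriSpace ψ) {c : ℝ} (b : ContDiffBump c) :
    Continuous (fun n : S2 => ∫ u : ℝ,
      (b u * deriv (fun v : ℝ => ψ (v, n)) u - ψ (u, n) * deriv (⇑b) u)) := by
  obtain ⟨Cψ, hCψ0, hCψ⟩ := psi_bound hψ
  obtain ⟨CD, hCD0, hCD⟩ := dpsi_bound hψ
  have hdbc : Continuous (deriv (⇑b)) :=
    (b.contDiff (n := 2)).continuous_deriv (by norm_num)
  obtain ⟨Md, hMd⟩ := hdbc.bounded_above_of_compact_support b.hasCompactSupport.deriv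
  have hMd0 : 0 ≤ Md := le_trans (norm_nonneg _) (hMd 0)
  apply continuous_of_dominated (bound := fun u : ℝ => CD * (1 + u ^ 2)⁻¹
    + Cψ * Md * (1 + u ^ 2)⁻¹)
  · intro n
    apply Continuous.aestronglyMeasurable
    exact (b.continuous.mul ((continuous_derivSlice hψ.1).comp
        (continuous_id.prodMk continuous_const))).sub
      ((hψ.1.continuous.comp (continuous_id.prodMk continuous_const)).mul hdbc)
  · intro n
    filter_upwards with u
    rw [Real.norm_eq_abs]
    set t : ℝ := (1 + u ^ 2)⁻¹ with ht
    have ht0 : 0 < t := by positivity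
    have hb01 : |(b u : ℝ)| ≤ 1 := by
      rw [abs_of_nonneg b.nonneg]
      exact b.le_one
    have hdb : |deriv (⇑b) u| ≤ Md := by
      have := hMd u
      rwa [Real.norm_eq_abs] at this
    calc |b u * deriv (fun v : ℝ => ψ (v, n)) u - ψ (u, n) * deriv (⇑b) u|
        ≤ |(b u : ℝ)| * |deriv (fun v : ℝ => ψ (v, n)) u|
          + |ψ (u, n)| * |deriv (⇑b) u| := by
          refine le_trans (abs_sub _ _) ?_
          rw [abs_mul, abs_mul]
      _ ≤ 1 * (CD * t) + Cψ * t * Md := by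
          apply add_le_add
          · exact mul_le_mul hb01 (hCD u n) (abs_nonneg _) one_pos.le
          · exact mul_le_mul (hCψ u n) hdb (abs_nonneg _) (by positivity)
      _ = CD * t + Cψ * Md * t := by ring
  · exact ((integrable_inv_one_add_sq.const_mul CD).add
      (integrable_inv_one_add_sq.const_mul (Cψ * Md)))
  · filter_upwards with u
    exact (continuous_const.mul ((continuous_derivSlice hψ.1).comp
        (continuous_const.prodMk continuous_id))).sub
      ((hψ.1.continuous.comp (continuous_const.prodMk continuous_id)).mul continuous_const)

lemma nondegenerate {ψ : ℝ × S2 → ℝ} (hψ : InScriSpace ψ)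
    (h : ∀ φ : ℝ × S2 → ℝ, InScriSpace φ → scriForm ψ φ = 0) : ψ = 0 := by
  have step1 : ∀ (c : ℝ) (b : ContDiffBump c) (n : S2),
      (∫ u : ℝ, (b u * deriv (fun v : ℝ => ψ (v, n)) u - ψ (u, n) * deriv (⇑b) u)) = 0 := by
    intro c b
    apply sphere_vanish (Q_continuous hψ b)
    intro g hg
    have hφ := h (fun p : ℝ × S2 => g p.2 * b p.1) (testfun_inscri g hg b)
    rw [scriForm] at hφ
    simp only [] at hφ
    have h2 := (mul_eq_zero.1 hφ).resolve_left (by norm_num)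
    rw [← h2]
    apply integral_congr_ae
    filter_upwards with n
    rw [← integral_const_mul]
    congr 1
    funext u
    have hd : deriv (fun v : ℝ => g n * b v) u = g n * deriv (⇑b) u :=
      deriv_const_mul (g n) ((b.contDiff (n := 1)).differentiable one_ne_zero).differentiableAt
    rw [hd]
    ring
  have step2 : ∀ (n : S2) (c : ℝ) (b : ContDiffBump c),
      (∫ u : ℝ, b u * deriv (fun v : ℝ => ψ (v, n)) u) = 0 := by
    intro n c b
    set hfun : ℝ → ℝ := fun v => ψ (v, n) with hh
    have hC : ContDiff ℝ (⊤:ℕ∞) hfun := slice_contDiff hψ.1 n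
    have hdiff : Differentiable ℝ hfun := hC.differentiable (by simp)
    have hdc : Continuous (deriv hfun) := hC.continuous_deriv (by exact_mod_cast le_top)
    have intA : Integrable (fun u : ℝ => b u * deriv hfun u) :=
      (b.continuous.mul hdc).integrable_of_hasCompactSupport b.hasCompactSupport.mul_right
    have intB : Integrable (fun u : ℝ => hfun u * deriv (⇑b) u) :=
      ((hψ.1.continuous.comp (continuous_id.prodMk continuous_const)).mul
        ((b.contDiff (n := 2)).continuous_deriv (by norm_num))).integrable_of_hasCompactSupport
        b.hasCompactSupport.deriv.mul_left
    have hAB : (∫ u : ℝ, b u * deriv hfun u) - ∫ u : ℝ, hfun u * deriv (⇑b) u = 0 := by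
      rw [← integral_sub intA intB]
      exact step1 c b n
    have hftc : (∫ u : ℝ, deriv (fun u => hfun u * b u) u) = 0 := by
      apply integral_deriv_eq_zero_of_compactSupport
      · exact (hC.of_le (by exact_mod_cast le_top)).mul (b.contDiff)
      · exact b.hasCompactSupport.mul_left
    have hderiv_mul : ∀ u : ℝ, deriv (fun u => hfun u * b u) u
        = deriv hfun u * b u + hfun u * deriv (⇑b) u := by
      intro u
      exact deriv_mul (hdiff u) ((b.contDiff (n := 1)).differentiable one_ne_zero).differentiableAt
    have hsum : (∫ u : ℝ, b u * deriv hfun u) + ∫ u : ℝ, hfun u * deriv (⇑b) u = 0 := by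
      rw [← integral_add intA intB] at *
      rw [← hftc]
      apply integral_congr_ae
      filter_upwards with u
      rw [hderiv_mul u]
      ring
    linarith
  funext p
  obtain ⟨u, n⟩ := p
  have hC : ContDiff ℝ (⊤:ℕ∞) (fun v : ℝ => ψ (v, n)) := slice_contDiff hψ.1 n
  have hdiff : Differentiable ℝ (fun v : ℝ => ψ (v, n)) :=
    hC.differentiable (by simp)
  have hdzero : ∀ x : ℝ, deriv (fun v : ℝ => ψ (v, n)) x = 0 :=
    zero_of_bump_integrals (hC.continuous_deriv (by exact_mod_cast le_top))
      (fun c b => step2 n c b)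
  have hconst : ∀ x y : ℝ, ψ (x, n) = ψ (y, n) := by
    intro x y
    exact is_const_of_deriv_eq_zero hdiff hdzero x y
  have hzero : ψ (u, n) = 0 := by
    by_contra hne
    have habs : 0 < |ψ (u, n)| := abs_pos.2 hne
    obtain ⟨R, hR⟩ := hψ.2 0 0 |ψ (u, n)| habs
    have := hR (|R| + 1) (by
      rw [abs_of_nonneg (by positivity)]
      linarith [le_abs_self R]) n
    rw [pow_zero, one_mul, iteratedDeriv_zero] at this
    rw [← hconst u (|R| + 1)] at this
    exact lt_irrefl _ this
  exact hzero

end Nondegenerate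

/-- The form `σ` is well defined (the integrand is integrable), bilinear, antisymmetric,
and nondegenerate on the space `𝒮(ℑ⁺)`: if `ψ ∈ 𝒮` pairs to zero with every `φ ∈ 𝒮`,
then `ψ = 0`. -/
theorem statement0 :
    (∀ ψ₁ ψ₂ : ℝ × S2 → ℝ, InScriSpace ψ₁ → InScriSpace ψ₂ →
      Integrable (fun p : S2 × ℝ =>
          ψ₂ (p.2, p.1) * deriv (fun v : ℝ => ψ₁ (v, p.1)) p.2
            - ψ₁ (p.2, p.1) * deriv (fun v : ℝ => ψ₂ (v, p.1)) p.2)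
        (sphereMeasure.prod (volume : Measure ℝ))) ∧
    (∀ ψ₁ ψ₁' ψ₂ : ℝ × S2 → ℝ, InScriSpace ψ₁ → InScriSpace ψ₁' → InScriSpace ψ₂ →
      ∀ a : ℝ, scriForm (fun p => a * ψ₁ p + ψ₁' p) ψ₂
        = a * scriForm ψ₁ ψ₂ + scriForm ψ₁' ψ₂) ∧
    (∀ ψ₁ ψ₂ ψ₂' : ℝ × S2 → ℝ, InScriSpace ψ₁ → InScriSpace ψ₂ → InScriSpace ψ₂' →
      ∀ a : ℝ, scriForm ψ₁ (fun p => a * ψ₂ p + ψ₂' p)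
        = a * scriForm ψ₁ ψ₂ + scriForm ψ₁ ψ₂') ∧
    (∀ ψ₁ ψ₂ : ℝ × S2 → ℝ, InScriSpace ψ₁ → InScriSpace ψ₂ →
      scriForm ψ₁ ψ₂ = - scriForm ψ₂ ψ₁) ∧
    (∀ ψ : ℝ × S2 → ℝ, InScriSpace ψ →
      (∀ φ : ℝ × S2 → ℝ, InScriSpace φ → scriForm ψ φ = 0) → ψ = 0) := by
  refine ⟨?_, ?_, ?_, ?_, ?_⟩
  · intro ψ₁ ψ₂ h₁ h₂
    exact integrable_kernel h₁ h₂
  · intro ψ₁ ψ₁' ψ₂ h₁ h₁' h₂ a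
    exact scriForm_left_linear h₁ h₁' h₂ a
  · intro ψ₁ ψ₂ ψ₂' h₁ h₂ h₂' a
    exact scriForm_right_linear h₁ h₂ h₂' a
  · intro ψ₁ ψ₂ _ _
    exact scriForm_antisymm ψ₁ ψ₂
  · intro ψ hψ h
    exact nondegenerate hψ h
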